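/- arXiv:2011.01827 — 2 statements merged into one kernel-verified Lean document; each statement's English description precedes it below -/
import Mathlib

section
/- Let L be the model of the free graded Lie algebra on two generators a, b of odd degree described in the context, and for k, n ∈ ℕ let L^{(k,n)} be its component of word length n and word length k in b. Then for every n ≥ 1 the ℚ-vector space L^{(2,n)} is finite dimensional of dimension: n/2 − 1 if n ≡ 0 (mod 4); (n − 1)/2 if n is odd; and n/2 if n ≡ 2 (mod 4). -/
/-!
Common setup: the free graded Lie algebra on two odd-degree generators `a`, `b`,
modelled inside its universal enveloping algebra `A := FreeAlgebra ℚ (Fin 2)`.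
-/

noncomputable section

namespace Omnibus

/-- The free associative unital `ℚ`-algebra on two generators. -/
abbrev A : Type := FreeAlgebra ℚ (Fin 2)

/-- The first generator, of odd degree. -/
def a : A := FreeAlgebra.ι ℚ 0

/-- The second generator, of odd degree. -/
def b : A := FreeAlgebra.ι ℚ 1

/-- The word (noncommutative monomial) in the letters `a`, `b` associated to a
list of letters. -/
def word (w : List (Fin 2)) : A := (w.map (FreeAlgebra.ι ℚ)).prod

/-- The `ℚ`-basis of `A` given by the words in `a`, `b`. -/
def basisWords : Module.Basis (FreeMonoid (Fin 2)) ℚ A := FreeAlgebra.basisFreeMonoid ℚ (Fin 2)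

/-- The `ℚ`-linear projection of `A` onto the span of the words of odd length,
sending every word of even length to `0`. -/
def pr : A →ₗ[ℚ] A :=
  basisWords.constr ℚ fun w =>
    if Odd (FreeMonoid.toList w).length then word (FreeMonoid.toList w) else 0

/-- The bracket `⁅x,y⁆ = x*y − y*x + 2·(π y)·(π x)`; on elements homogeneous for the
parity grading by word length this is the super-commutator for both generators odd. -/
def br (x y : A) : A := x * y - y * x + 2 * pr y * pr x

/-- A `ℚ`-subspace of `A` closed under the bracket. -/
def IsBracketClosed (S : Submodule ℚ A) : Prop := ∀ x ∈ S, ∀ y ∈ S, br x y ∈ S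

/-- `L`: the smallest `ℚ`-subspace of `A` containing `a`, `b` and closed under the
bracket; a model of the free graded Lie algebra on two odd-degree generators. -/
def L : Submodule ℚ A := sInf {S : Submodule ℚ A | a ∈ S ∧ b ∈ S ∧ IsBracketClosed S}

/-- The span of the set of words `w` satisfying a property `P`. -/
def wordsSpan (P : List (Fin 2) → Prop) : Submodule ℚ A :=
  Submodule.span ℚ (word '' {w | P w})

/-- `L^{(k)}`: the part of `L` of word length `k` in `b`. -/
def Lk (k : ℕ) : Submodule ℚ A := L ⊓ wordsSpan fun w => w.count 1 = k

/-- `L^{(k,n)}`: the part of `L` of word length `k` in `b` and total word length `n`. -/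
def Lkn (k n : ℕ) : Submodule ℚ A :=
  L ⊓ wordsSpan fun w => w.count 1 = k ∧ w.length = n

/-- The `j`-fold iterated adjoint map `ad(x)^j(y)`. -/
def adIter (x : A) (j : ℕ) (y : A) : A := (br x)^[j] y

end Omnibus

namespace Omnibus

theorem word_nil : word [] = 1 := rfl

theorem word_cons (x : Fin 2) (w : List (Fin 2)) :
    word (x :: w) = FreeAlgebra.ι ℚ x * word w := by simp [word]

theorem word_append (u v : List (Fin 2)) : word (u ++ v) = word u * word v := by simp [word]

theorem basisWords_apply (w : FreeMonoid (Fin 2)) : basisWords w = word (FreeMonoid.toList w) := by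
  have h0 : basisWords w = (FreeAlgebra.equivMonoidAlgebraFreeMonoid (R := ℚ) (X := Fin 2)).symm
      (MonoidAlgebra.single w 1) := by
    simp only [basisWords, FreeAlgebra.basisFreeMonoid, Module.Basis.map_apply,
      Finsupp.coe_basisSingleOne, AlgEquiv.toLinearEquiv_symm]
    rfl
  rw [h0]
  have key : ∀ l : List (Fin 2),
      (FreeAlgebra.equivMonoidAlgebraFreeMonoid (R := ℚ) (X := Fin 2)).symm
      (MonoidAlgebra.of ℚ (FreeMonoid (Fin 2)) (FreeMonoid.ofList l)) = word l := by
    intro l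
    induction l with
    | nil =>
      have : MonoidAlgebra.of ℚ (FreeMonoid (Fin 2)) (FreeMonoid.ofList []) = 1 := map_one _
      rw [this, map_one, word_nil]
    | cons x l ih =>
      have hx : FreeMonoid.ofList (x :: l) = FreeMonoid.of x * FreeMonoid.ofList l := rfl
      rw [hx, map_mul, map_mul, ih, word_cons]
      congr 1
      have he : FreeAlgebra.equivMonoidAlgebraFreeMonoid (R := ℚ) (X := Fin 2) (FreeAlgebra.ι ℚ x)
          = MonoidAlgebra.of ℚ (FreeMonoid (Fin 2)) (FreeMonoid.of x) := by
        simp [FreeAlgebra.equivMonoidAlgebraFreeMonoid]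
      rw [← he, AlgEquiv.symm_apply_apply]
  have := key (FreeMonoid.toList w)
  simpa [MonoidAlgebra.of_apply] using this

theorem word_eq_basis (w : List (Fin 2)) : word w = basisWords (FreeMonoid.ofList w) := by
  rw [basisWords_apply, FreeMonoid.toList_ofList]

theorem repr_word (w : List (Fin 2)) :
    basisWords.repr (word w) = Finsupp.single (FreeMonoid.ofList w) 1 := by
  rw [word_eq_basis, Module.Basis.repr_self]

/-! ### wordsSpan lemmas -/

theorem word_mem_wordsSpan {P : List (Fin 2) → Prop} {w : List (Fin 2)} (h : P w) :
    word w ∈ wordsSpan P := Submodule.subset_span ⟨w, h, rfl⟩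

theorem wordsSpan_mono {P Q : List (Fin 2) → Prop} (h : ∀ w, P w → Q w) :
    wordsSpan P ≤ wordsSpan Q :=
  Submodule.span_mono (Set.image_mono fun w hw => h w hw)

theorem mem_wordsSpan_top (x : A) : x ∈ wordsSpan (fun _ => True) := by
  have h1 : x ∈ Submodule.span ℚ (Set.range basisWords) := by
    rw [Module.Basis.span_eq]; trivial
  refine Submodule.span_mono ?_ h1
  rintro _ ⟨w, rfl⟩
  exact ⟨FreeMonoid.toList w, trivial, (basisWords_apply w).symm⟩

theorem wordsSpan_mul {P Q R : List (Fin 2) → Prop}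
    (hPQ : ∀ u v, P u → Q v → R (u ++ v)) {x y : A}
    (hx : x ∈ wordsSpan P) (hy : y ∈ wordsSpan Q) : x * y ∈ wordsSpan R := by
  induction hx using Submodule.span_induction with
  | mem u hu =>
    obtain ⟨u, hu, rfl⟩ := hu
    induction hy using Submodule.span_induction with
    | mem v hv =>
      obtain ⟨v, hv, rfl⟩ := hv
      rw [← word_append]
      exact word_mem_wordsSpan (hPQ u v hu hv)
    | zero => simp only [mul_zero]; exact Submodule.zero_mem _
    | add y z _ _ hy hz => rw [mul_add]; exact Submodule.add_mem _ hy hz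
    | smul c y _ hy => rw [mul_smul_comm]; exact Submodule.smul_mem _ c hy
  | zero => simp only [zero_mul]; exact Submodule.zero_mem _
  | add x z _ _ h1 h2 => rw [add_mul]; exact Submodule.add_mem _ h1 h2
  | smul c x _ h1 => rw [smul_mul_assoc]; exact Submodule.smul_mem _ c h1

/-! ### pr and proj -/

theorem pr_word (w : List (Fin 2)) :
    pr (word w) = if Odd w.length then word w else 0 := by
  rw [word_eq_basis, pr, Module.Basis.constr_basis]
  simp only [FreeMonoid.toList_ofList, word_eq_basis]

theorem pr_eq_self {P : List (Fin 2) → Prop} (h : ∀ w, P w → Odd w.length) {x : A}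
    (hx : x ∈ wordsSpan P) : pr x = x := by
  induction hx using Submodule.span_induction with
  | mem u hu => obtain ⟨u, hu, rfl⟩ := hu; rw [pr_word, if_pos (h u hu)]
  | zero => exact map_zero _
  | add y z _ _ hy hz => rw [map_add, hy, hz]
  | smul c y _ hy => rw [map_smul, hy]

theorem pr_eq_zero {P : List (Fin 2) → Prop} (h : ∀ w, P w → ¬ Odd w.length) {x : A}
    (hx : x ∈ wordsSpan P) : pr x = 0 := by
  induction hx using Submodule.span_induction with
  | mem u hu => obtain ⟨u, hu, rfl⟩ := hu; rw [pr_word, if_neg (h u hu)]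
  | zero => exact map_zero _
  | add y z _ _ hy hz => rw [map_add, hy, hz, add_zero]
  | smul c y _ hy => rw [map_smul, hy, smul_zero]

theorem pr_mem {P : List (Fin 2) → Prop} {x : A} (hx : x ∈ wordsSpan P) :
    pr x ∈ wordsSpan P := by
  induction hx using Submodule.span_induction with
  | mem u hu =>
    obtain ⟨u, hu, rfl⟩ := hu
    rw [pr_word]
    split
    · exact word_mem_wordsSpan hu
    · exact Submodule.zero_mem _
  | zero => rw [map_zero]; exact Submodule.zero_mem _
  | add y z _ _ hy hz => rw [map_add]; exact Submodule.add_mem _ hy hz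
  | smul c y _ hy => rw [map_smul]; exact Submodule.smul_mem _ c hy

open Classical in
/-- The projection onto the span of the words satisfying `P`. -/
def proj (P : List (Fin 2) → Prop) : A →ₗ[ℚ] A :=
  basisWords.constr ℚ fun w =>
    if P (FreeMonoid.toList w) then word (FreeMonoid.toList w) else 0

theorem proj_word_pos {P : List (Fin 2) → Prop} {w : List (Fin 2)} (h : P w) :
    proj P (word w) = word w := by
  rw [word_eq_basis, proj, Module.Basis.constr_basis]
  simp only [FreeMonoid.toList_ofList, word_eq_basis, if_pos h, h, ↓reduceIte]

theorem proj_word_neg {P : List (Fin 2) → Prop} {w : List (Fin 2)} (h : ¬ P w) :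
    proj P (word w) = 0 := by
  rw [word_eq_basis, proj, Module.Basis.constr_basis]
  simp only [FreeMonoid.toList_ofList, if_neg h, h, ↓reduceIte]

theorem proj_eq_self {P Q : List (Fin 2) → Prop} (h : ∀ w, Q w → P w) {x : A}
    (hx : x ∈ wordsSpan Q) : proj P x = x := by
  induction hx using Submodule.span_induction with
  | mem u hu => obtain ⟨u, hu, rfl⟩ := hu; rw [proj_word_pos (h u hu)]
  | zero => exact map_zero _
  | add y z _ _ hy hz => rw [map_add, hy, hz]
  | smul c y _ hy => rw [map_smul, hy]

theorem proj_eq_zero {P Q : List (Fin 2) → Prop} (h : ∀ w, Q w → ¬ P w) {x : A}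
    (hx : x ∈ wordsSpan Q) : proj P x = 0 := by
  induction hx using Submodule.span_induction with
  | mem u hu => obtain ⟨u, hu, rfl⟩ := hu; rw [proj_word_neg (h u hu)]
  | zero => exact map_zero _
  | add y z _ _ hy hz => rw [map_add, hy, hz, add_zero]
  | smul c y _ hy => rw [map_smul, hy, smul_zero]

theorem proj_mem {P Q : List (Fin 2) → Prop} {x : A} (hx : x ∈ wordsSpan Q) :
    proj P x ∈ wordsSpan (fun w => Q w ∧ P w) := by
  induction hx using Submodule.span_induction with
  | mem u hu =>
    obtain ⟨u, hu, rfl⟩ := hu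
    by_cases hP : P u
    · rw [proj_word_pos hP]; exact word_mem_wordsSpan ⟨hu, hP⟩
    · rw [proj_word_neg hP]; exact Submodule.zero_mem _
  | zero => rw [map_zero]; exact Submodule.zero_mem _
  | add y z _ _ hy hz => rw [map_add]; exact Submodule.add_mem _ hy hz
  | smul c y _ hy => rw [map_smul]; exact Submodule.smul_mem _ c hy

end Omnibus

namespace Omnibus

/-! ### The elements `c i` and `d i j` -/

def c : ℕ → A
  | 0 => b
  | (i+1) => br a (c i)

def a2 : A := a * a

def d (i j : ℕ) : A := br (c i) (c j)

theorem a_eq : a = word [0] := by simp [a, word]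
theorem b_eq : b = word [1] := by simp [b, word]
theorem a2_eq : a2 = word [0, 0] := by simp [a2, a, word]

theorem a_mem : a ∈ wordsSpan (fun w => w.count 1 = 0 ∧ w.length = 1) := by
  rw [a_eq]; exact word_mem_wordsSpan (by constructor <;> simp)

theorem a2_mem : a2 ∈ wordsSpan (fun w => w.count 1 = 0 ∧ w.length = 2) := by
  rw [a2_eq]; exact word_mem_wordsSpan (by constructor <;> simp)

theorem pr_a : pr a = a := by
  rw [a_eq, pr_word]; simp

theorem pr_a2 : pr a2 = 0 := by
  rw [a2_eq, pr_word]; simp [Nat.odd_iff]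

theorem br_mem {P Q R : List (Fin 2) → Prop}
    (h1 : ∀ u v, P u → Q v → R (u ++ v)) (h2 : ∀ u v, P u → Q v → R (v ++ u))
    {x y : A} (hx : x ∈ wordsSpan P) (hy : y ∈ wordsSpan Q) : br x y ∈ wordsSpan R := by
  have t1 := wordsSpan_mul h1 hx hy
  have t2 : y * x ∈ wordsSpan R := wordsSpan_mul (fun u v hu hv => h2 v u hv hu) hy hx
  have t3 : pr y * pr x ∈ wordsSpan R :=
    wordsSpan_mul (fun u v hu hv => h2 v u hv hu) (pr_mem hy) (pr_mem hx)
  have e : br x y = x * y - y * x + (pr y * pr x + pr y * pr x) := by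
    rw [br]; noncomm_ring
  rw [e]
  exact add_mem (sub_mem t1 t2) (add_mem t3 t3)

theorem c_mem (i : ℕ) : c i ∈ wordsSpan (fun w => w.count 1 = 1 ∧ w.length = i + 1) := by
  induction i with
  | zero => rw [show c 0 = b from rfl, b_eq]; exact word_mem_wordsSpan (by constructor <;> simp)
  | succ i ih =>
    show br a (c i) ∈ _
    refine br_mem ?_ ?_ a_mem ih <;>
    · rintro u v ⟨hu1, hu2⟩ ⟨hv1, hv2⟩
      constructor <;> simp [List.count_append, hu1, hu2, hv1, hv2] <;> omega

theorem d_mem (i j : ℕ) :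
    d i j ∈ wordsSpan (fun w => w.count 1 = 2 ∧ w.length = i + j + 2) := by
  refine br_mem ?_ ?_ (c_mem i) (c_mem j) <;>
  · rintro u v ⟨hu1, hu2⟩ ⟨hv1, hv2⟩
    constructor <;> simp [List.count_append, hu1, hu2, hv1, hv2] <;> omega

theorem pr_c_even {i : ℕ} (h : Even i) : pr (c i) = c i := by
  refine pr_eq_self (fun w hw => ?_) (c_mem i)
  rw [hw.2]; exact h.add_one

theorem pr_c_odd {i : ℕ} (h : ¬ Even i) : pr (c i) = 0 := by
  refine pr_eq_zero (fun w hw => ?_) (c_mem i)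
  rw [hw.2, Nat.odd_add_one]
  simpa using h

theorem pr_d_even {i j : ℕ} (h : Even (i + j)) : pr (d i j) = 0 := by
  refine pr_eq_zero (fun w hw => ?_) (d_mem i j)
  rw [hw.2]
  rcases h with ⟨k, hk⟩
  simp [hk, Nat.odd_iff, Nat.add_mod, Nat.mul_mod]
  omega

theorem pr_d_odd {i j : ℕ} (h : ¬ Even (i + j)) : pr (d i j) = d i j := by
  refine pr_eq_self (fun w hw => ?_) (d_mem i j)
  rw [hw.2]
  rw [Nat.even_iff] at h
  rw [Nat.odd_iff]
  omega

theorem c_succ_even {i : ℕ} (h : Even i) : c (i + 1) = a * c i + c i * a := by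
  show br a (c i) = _
  rw [br, pr_a, pr_c_even h]
  noncomm_ring

theorem c_succ_odd {i : ℕ} (h : ¬ Even i) : c (i + 1) = a * c i - c i * a := by
  show br a (c i) = _
  rw [br, pr_a, pr_c_odd h]
  noncomm_ring

theorem br_swap_odd {x y : A} (hx : pr x = x) (hy : pr y = y) : br y x = br x y := by
  rw [br, br, hx, hy]; noncomm_ring

theorem br_swap_ne {x y : A} (h : pr x = 0 ∨ pr y = 0) : br y x = - br x y := by
  rcases h with h | h <;> rw [br, br, h] <;> noncomm_ring

theorem two_mul_eq_smul (z : A) : 2 * z = (2 : ℚ) • z := by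
  rw [Algebra.smul_def, map_ofNat]

theorem br_a_a : br a a = (2 : ℚ) • a2 := by
  rw [br, pr_a, ← two_mul_eq_smul, a2]; noncomm_ring

theorem br_a_a2 : br a a2 = 0 := by
  rw [br, pr_a, pr_a2, a2]; noncomm_ring

theorem br_a2_x_gen (x : A) : br a2 x = a2 * x - x * a2 := by
  rw [br, pr_a2]; noncomm_ring

theorem br_a2_x_eq {x : A} (h1 : pr x = x) (h2 : pr (br a x) = 0) :
    br a2 x = br a (br a x) := by
  have e : br a x = a * x + x * a := by rw [br, pr_a, h1]; noncomm_ring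
  have e2 : br a (br a x) = a * br a x - br a x * a := by
    rw [br, pr_a, h2]; noncomm_ring
  rw [e2, e, br_a2_x_gen]
  simp only [a2]; noncomm_ring

theorem br_a2_x_eq' {x : A} (h1 : pr x = 0) (h2 : pr (br a x) = br a x) :
    br a2 x = br a (br a x) := by
  have e : br a x = a * x - x * a := by rw [br, pr_a, h1]; noncomm_ring
  have e2 : br a (br a x) = a * br a x + br a x * a := by
    conv_lhs => rw [br]
    rw [pr_a, h2, e]; noncomm_ring
  rw [e2, e, br_a2_x_gen]
  simp only [a2]; noncomm_ring

theorem br_a2_c (i : ℕ) : br a2 (c i) = c (i + 2) := by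
  have : c (i + 2) = br a (br a (c i)) := rfl
  rw [this]
  by_cases h : Even i
  · exact br_a2_x_eq (pr_c_even h) (pr_c_odd (by simp [Nat.even_add_one, h]) :
      pr (c (i+1)) = 0)
  · exact br_a2_x_eq' (pr_c_odd h) (pr_c_even (by simp [Nat.even_add_one, h]) :
      pr (c (i+1)) = c (i+1))

theorem br_a2_d (i j : ℕ) : br a2 (d i j) = br a (br a (d i j)) := by
  by_cases h : Even (i + j)
  · refine br_a2_x_eq' (pr_d_even h) ?_
    refine pr_eq_self (fun w hw => ?_)
      (br_mem (P := fun w => w.count 1 = 0 ∧ w.length = 1)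
        (Q := fun w => w.count 1 = 2 ∧ w.length = i + j + 2)
        (R := fun w => w.length = i + j + 3) ?_ ?_ a_mem (d_mem i j))
    · rw [hw]
      rcases h with ⟨k, hk⟩
      rw [Nat.odd_iff]; omega
    · rintro u v ⟨_, hu⟩ ⟨_, hv⟩; simp [hu, hv] <;> omega
    · rintro u v ⟨_, hu⟩ ⟨_, hv⟩; simp [hu, hv] <;> omega
  · refine br_a2_x_eq (pr_d_odd h) ?_
    refine pr_eq_zero (fun w hw => ?_)
      (br_mem (P := fun w => w.count 1 = 0 ∧ w.length = 1)
        (Q := fun w => w.count 1 = 2 ∧ w.length = i + j + 2)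
        (R := fun w => w.length = i + j + 3) ?_ ?_ a_mem (d_mem i j))
    · rw [hw]
      rw [Nat.even_iff] at h
      rw [Nat.odd_iff]; omega
    · rintro u v ⟨_, hu⟩ ⟨_, hv⟩; simp [hu, hv] <;> omega
    · rintro u v ⟨_, hu⟩ ⟨_, hv⟩; simp [hu, hv] <;> omega

end Omnibus

namespace Omnibus

theorem br_a_d_even {i : ℕ} (hi : Even i) (j : ℕ) :
    br a (d i j) = d (i+1) j - d i (j+1) := by
  have hi1 : ¬ Even (i+1) := by simp [Nat.even_add_one, hi]
  rcases Nat.even_or_odd j with hj | hj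
  · have hj1 : ¬ Even (j+1) := by simp [Nat.even_add_one, hj]
    have e0 : d i j = c i * c j + c j * c i := by
      rw [d, br, pr_c_even hi, pr_c_even hj]; noncomm_ring
    have e1 : d (i+1) j = c (i+1) * c j - c j * c (i+1) := by
      rw [d, br, pr_c_odd hi1]; noncomm_ring
    have e2 : d i (j+1) = c i * c (j+1) - c (j+1) * c i := by
      rw [d, br, pr_c_odd hj1]; noncomm_ring
    have hD : pr (d i j) = 0 := pr_d_even (hi.add hj)
    rw [br, hD, pr_a, e0, e1, e2, c_succ_even hi, c_succ_even hj]
    noncomm_ring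
  · have hj' : ¬ Even j := Nat.not_even_iff_odd.mpr hj
    have hj1 : Even (j+1) := Nat.even_add_one.mpr hj'
    have e0 : d i j = c i * c j - c j * c i := by
      rw [d, br, pr_c_odd hj']; noncomm_ring
    have e1 : d (i+1) j = c (i+1) * c j - c j * c (i+1) := by
      rw [d, br, pr_c_odd hj']; noncomm_ring
    have e2 : d i (j+1) = c i * c (j+1) + c (j+1) * c i := by
      rw [d, br, pr_c_even hi, pr_c_even hj1]; noncomm_ring
    have hD : pr (d i j) = d i j := pr_d_odd (by
      rw [Nat.even_iff] at hi ⊢; rw [Nat.odd_iff] at hj; omega)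
    rw [br, hD, pr_a, e0, e1, e2, c_succ_even hi, c_succ_odd hj']
    noncomm_ring

theorem br_a_d_odd {i : ℕ} (hi : ¬ Even i) (j : ℕ) :
    br a (d i j) = d (i+1) j + d i (j+1) := by
  have hi1 : Even (i+1) := Nat.even_add_one.mpr hi
  rcases Nat.even_or_odd j with hj | hj
  · have hj1 : ¬ Even (j+1) := by simp [Nat.even_add_one, hj]
    have e0 : d i j = c i * c j - c j * c i := by
      rw [d, br, pr_c_odd hi]; noncomm_ring
    have e1 : d (i+1) j = c (i+1) * c j + c j * c (i+1) := by
      rw [d, br, pr_c_even hi1, pr_c_even hj]; noncomm_ring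
    have e2 : d i (j+1) = c i * c (j+1) - c (j+1) * c i := by
      rw [d, br, pr_c_odd hi]; noncomm_ring
    have hD : pr (d i j) = d i j := pr_d_odd (by
      rw [Nat.even_iff] at hj ⊢; rw [Nat.even_iff] at hi; omega)
    rw [br, hD, pr_a, e0, e1, e2, c_succ_odd hi, c_succ_even hj]
    noncomm_ring
  · have hj' : ¬ Even j := Nat.not_even_iff_odd.mpr hj
    have e0 : d i j = c i * c j - c j * c i := by
      rw [d, br, pr_c_odd hi]; noncomm_ring
    have e1 : d (i+1) j = c (i+1) * c j - c j * c (i+1) := by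
      rw [d, br, pr_c_odd hj']; noncomm_ring
    have e2 : d i (j+1) = c i * c (j+1) - c (j+1) * c i := by
      rw [d, br, pr_c_odd hi]; noncomm_ring
    have hD : pr (d i j) = 0 := pr_d_even (Odd.add_odd (Nat.not_even_iff_odd.mp hi) hj)
    rw [br, hD, pr_a, e0, e1, e2, c_succ_odd hi, c_succ_odd hj']
    noncomm_ring

end Omnibus

namespace Omnibus

def E : Submodule ℚ A := Submodule.span ℚ {x : A | ∃ i j, x = d i j}

theorem d_mem_E (i j : ℕ) : d i j ∈ E := Submodule.subset_span ⟨i, j, rfl⟩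

theorem br_add_right (x y z : A) : br x (y + z) = br x y + br x z := by
  simp only [br, map_add]; noncomm_ring

theorem br_smul_right (r : ℚ) (x y : A) : br x (r • y) = r • br x y := by
  simp only [br, map_smul, mul_smul_comm, smul_mul_assoc, smul_sub, smul_add]

theorem br_zero_right (x : A) : br x 0 = 0 := by simp [br]

theorem br_add_left (x y z : A) : br (x + y) z = br x z + br y z := by
  simp only [br, map_add]; noncomm_ring

theorem br_smul_left (r : ℚ) (x y : A) : br (r • x) y = r • br x y := by
  simp only [br, map_smul, mul_smul_comm, smul_mul_assoc, smul_sub, smul_add]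

theorem br_zero_left (y : A) : br 0 y = 0 := by simp [br]

theorem br_span_span {s t : Set A} {U : Submodule ℚ A}
    (h : ∀ x ∈ s, ∀ y ∈ t, br x y ∈ U) :
    ∀ x ∈ Submodule.span ℚ s, ∀ y ∈ Submodule.span ℚ t, br x y ∈ U := by
  intro x hx y hy
  induction hx using Submodule.span_induction with
  | mem x hx =>
    induction hy using Submodule.span_induction with
    | mem y hy => exact h _ hx _ hy
    | zero => rw [br_zero_right]; exact Submodule.zero_mem _
    | add y z _ _ h1 h2 => rw [br_add_right]; exact Submodule.add_mem _ h1 h2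
    | smul r y _ h1 => rw [br_smul_right]; exact Submodule.smul_mem _ r h1
  | zero => rw [br_zero_left]; exact Submodule.zero_mem _
  | add x z _ _ h1 h2 => rw [br_add_left]; exact Submodule.add_mem _ h1 h2
  | smul r x _ h1 => rw [br_smul_left]; exact Submodule.smul_mem _ r h1

theorem br_a_mem_E {x : A} (hx : x ∈ E) : br a x ∈ E := by
  induction hx using Submodule.span_induction with
  | mem x hx =>
    obtain ⟨i, j, rfl⟩ := hx
    by_cases hi : Even i
    · rw [br_a_d_even hi]; exact sub_mem (d_mem_E _ _) (d_mem_E _ _)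
    · rw [br_a_d_odd hi]; exact add_mem (d_mem_E _ _) (d_mem_E _ _)
  | zero => rw [br_zero_right]; exact Submodule.zero_mem _
  | add y z _ _ h1 h2 => rw [br_add_right]; exact Submodule.add_mem _ h1 h2
  | smul r y _ h1 => rw [br_smul_right]; exact Submodule.smul_mem _ r h1

def W3 : Submodule ℚ A := wordsSpan (fun w => 3 ≤ w.count 1)

def gen : Set A :=
  {a} ∪ {a2} ∪ Set.range c ∪ {x | ∃ i j, x = d i j} ∪ (word '' {w | 3 ≤ w.count 1})

def T : Submodule ℚ A := Submodule.span ℚ gen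

theorem a_mem_T : a ∈ T := Submodule.subset_span (by left; left; left; left; rfl)
theorem a2_mem_T : a2 ∈ T := Submodule.subset_span (by left; left; left; right; rfl)
theorem c_mem_T (i : ℕ) : c i ∈ T := Submodule.subset_span (by left; left; right; exact ⟨i, rfl⟩)
theorem d_mem_T (i j : ℕ) : d i j ∈ T := Submodule.subset_span (by left; right; exact ⟨i, j, rfl⟩)
theorem W3_le_T : W3 ≤ T := Submodule.span_mono (fun x hx => by right; exact hx)
theorem E_le_T : E ≤ T := Submodule.span_le.mpr (fun x hx => by
  obtain ⟨i, j, rfl⟩ := hx; exact d_mem_T i j)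

theorem c_memc (i : ℕ) : c i ∈ wordsSpan (fun w => w.count 1 = 1) :=
  wordsSpan_mono (fun w h => h.1) (c_mem i)

theorem d_memc (i j : ℕ) : d i j ∈ wordsSpan (fun w => w.count 1 = 2) :=
  wordsSpan_mono (fun w h => h.1) (d_mem i j)

theorem br_W3_right {y : A} (hy : y ∈ W3) (x : A) : br x y ∈ W3 := by
  refine br_mem (P := fun _ => True) (Q := fun w => 3 ≤ w.count 1) ?_ ?_
    (mem_wordsSpan_top x) hy <;>
  · intro u v _ hv; simp only [List.count_append]; omega

theorem br_W3_left {x : A} (hx : x ∈ W3) (y : A) : br x y ∈ W3 := by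
  refine br_mem (P := fun w => 3 ≤ w.count 1) (Q := fun _ => True) ?_ ?_
    hx (mem_wordsSpan_top y) <;>
  · intro u v hu _; simp only [List.count_append]; omega

theorem br_c_d_W3 {x y : A} {p q : ℕ} (hp : 3 ≤ p + q)
    (hx : x ∈ wordsSpan (fun w => w.count 1 = p)) (hy : y ∈ wordsSpan (fun w => w.count 1 = q)) :
    br x y ∈ W3 := by
  refine br_mem ?_ ?_ hx hy <;>
  · intro u v hu hv; simp only [List.count_append, hu, hv]; omega

theorem c_succ_eq (i : ℕ) : br a (c i) = c (i + 1) := rfl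

theorem T_closed : IsBracketClosed T := by
  intro x hx y hy
  refine br_span_span ?_ x hx y hy
  rintro g hg h hh
  rcases hg with (((rfl | rfl) | ⟨i, rfl⟩) | ⟨i, j, rfl⟩) | ⟨w, hw, rfl⟩
  · -- g = a
    rcases hh with (((rfl | rfl) | ⟨k, rfl⟩) | ⟨k, l, rfl⟩) | ⟨v, hv, rfl⟩
    · rw [br_a_a]; exact Submodule.smul_mem _ _ a2_mem_T
    · rw [br_a_a2]; exact Submodule.zero_mem _
    · rw [c_succ_eq]; exact c_mem_T (k+1)
    · exact E_le_T (br_a_mem_E (d_mem_E k l))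
    · exact W3_le_T (br_W3_right (word_mem_wordsSpan hv) a)
  · -- g = a2
    rcases hh with (((rfl | rfl) | ⟨k, rfl⟩) | ⟨k, l, rfl⟩) | ⟨v, hv, rfl⟩
    · rw [br, pr_a, pr_a2]; have : a2 * a - a * a2 + 2 * a * 0 = 0 := by
        rw [a2]; noncomm_ring
      rw [this]; exact Submodule.zero_mem _
    · rw [br, pr_a2]; have : a2 * a2 - a2 * a2 + 2 * 0 * 0 = 0 := by noncomm_ring
      rw [this]; exact Submodule.zero_mem _
    · rw [br_a2_c]; exact c_mem_T (k+2)
    · rw [br_a2_d]; exact E_le_T (br_a_mem_E (br_a_mem_E (d_mem_E k l)))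
    · exact W3_le_T (br_W3_right (word_mem_wordsSpan hv) a2)
  · -- g = c i
    rcases hh with (((rfl | rfl) | ⟨k, rfl⟩) | ⟨k, l, rfl⟩) | ⟨v, hv, rfl⟩
    · by_cases hi : Even i
      · rw [br_swap_odd pr_a (pr_c_even hi), c_succ_eq]; exact c_mem_T (i+1)
      · rw [br_swap_ne (Or.inr (pr_c_odd hi)), c_succ_eq]
        exact neg_mem (c_mem_T (i+1))
    · rw [br_swap_ne (Or.inl pr_a2), br_a2_c]; exact neg_mem (c_mem_T (i+2))
    · exact d_mem_T i k
    · exact W3_le_T (br_c_d_W3 (by omega) (c_memc i) (d_memc k l))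
    · exact W3_le_T (br_W3_right (word_mem_wordsSpan hv) (c i))
  · -- g = d i j
    rcases hh with (((rfl | rfl) | ⟨k, rfl⟩) | ⟨k, l, rfl⟩) | ⟨v, hv, rfl⟩
    · by_cases hij : Even (i + j)
      · rw [br_swap_ne (Or.inr (pr_d_even hij))]
        exact neg_mem (E_le_T (br_a_mem_E (d_mem_E i j)))
      · rw [br_swap_odd pr_a (pr_d_odd hij)]
        exact E_le_T (br_a_mem_E (d_mem_E i j))
    · rw [br_swap_ne (Or.inl pr_a2), br_a2_d]
      exact neg_mem (E_le_T (br_a_mem_E (br_a_mem_E (d_mem_E i j))))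
    · exact W3_le_T (br_c_d_W3 (by omega) (d_memc i j) (c_memc k))
    · exact W3_le_T (br_c_d_W3 (p := 2) (q := 2) (by omega) (d_memc i j) (d_memc k l))
    · exact W3_le_T (br_W3_right (word_mem_wordsSpan hv) (d i j))
  · -- g = word w, 3 ≤ count
    exact W3_le_T (br_W3_left (word_mem_wordsSpan hw) h)

theorem a_mem_L : a ∈ L := Submodule.mem_sInf.mpr (fun S hS => hS.1)
theorem b_mem_L : b ∈ L := Submodule.mem_sInf.mpr (fun S hS => hS.2.1)

theorem L_closed : IsBracketClosed L := by
  intro x hx y hy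
  refine Submodule.mem_sInf.mpr (fun S hS => ?_)
  exact hS.2.2 x (Submodule.mem_sInf.mp hx S hS) y (Submodule.mem_sInf.mp hy S hS)

theorem c_mem_L (i : ℕ) : c i ∈ L := by
  induction i with
  | zero => exact b_mem_L
  | succ i ih => exact L_closed a a_mem_L (c i) ih

theorem d_mem_L (i j : ℕ) : d i j ∈ L := L_closed _ (c_mem_L i) _ (c_mem_L j)

theorem L_le_T : L ≤ T := sInf_le ⟨a_mem_T, c_mem_T 0, T_closed⟩

end Omnibus

namespace Omnibus

def En (n : ℕ) : Submodule ℚ A :=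
  Submodule.span ℚ {x : A | ∃ i j, i + j + 2 = n ∧ x = d i j}

theorem proj_T {n : ℕ} {z : A} (hz : z ∈ T) :
    proj (fun w => w.count 1 = 2 ∧ w.length = n) z ∈ En n := by
  induction hz using Submodule.span_induction with
  | mem g hg =>
    rcases hg with (((rfl | rfl) | ⟨i, rfl⟩) | ⟨i, j, rfl⟩) | ⟨w, hw, rfl⟩
    · rw [proj_eq_zero (fun w hw => by simp [hw.1]) a_mem]; exact Submodule.zero_mem _
    · rw [proj_eq_zero (fun w hw => by simp [hw.1]) a2_mem]; exact Submodule.zero_mem _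
    · rw [proj_eq_zero (fun w hw => by simp [hw.1]) (c_mem i)]; exact Submodule.zero_mem _
    · by_cases hn : i + j + 2 = n
      · rw [proj_eq_self (fun w hw => ⟨hw.1, by rw [hw.2, hn]⟩) (d_mem i j)]
        exact Submodule.subset_span ⟨i, j, hn, rfl⟩
      · rw [proj_eq_zero (fun w hw => by
          rintro ⟨-, h2⟩; exact hn (by rw [← hw.2, h2])) (d_mem i j)]
        exact Submodule.zero_mem _
    · rw [proj_word_neg (by
        rintro ⟨h1, -⟩
        simp only [Set.mem_setOf_eq] at hw
        omega)]
      exact Submodule.zero_mem _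
  | zero => rw [map_zero]; exact Submodule.zero_mem _
  | add y z _ _ h1 h2 => rw [map_add]; exact Submodule.add_mem _ h1 h2
  | smul r y _ h1 => rw [map_smul]; exact Submodule.smul_mem _ r h1

theorem Lkn_eq_En (n : ℕ) : Lkn 2 n = En n := by
  apply le_antisymm
  · rintro x ⟨hxL, hxW⟩
    have hxT : x ∈ T := L_le_T hxL
    have : proj (fun w => w.count 1 = 2 ∧ w.length = n) x = x :=
      proj_eq_self (fun w hw => hw) hxW
    rw [← this]
    exact proj_T hxT
  · rw [En, Submodule.span_le]
    rintro x ⟨i, j, hn, rfl⟩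
    refine ⟨d_mem_L i j, ?_⟩
    exact wordsSpan_mono (fun w hw => ⟨hw.1, by rw [hw.2, hn]⟩) (d_mem i j)

end Omnibus

namespace Omnibus

def gam : ℕ → ℚ
  | 0 => 1
  | (i+1) => (if Even i then 1 else -1) * gam i

theorem gam_ne_zero (i : ℕ) : gam i ≠ 0 := by
  induction i with
  | zero => norm_num [gam]
  | succ i ih =>
    rw [gam]
    split <;> simpa using ih

/-- The "remainder" predicate: words with a single `b`, of length `i+1`, starting with `a`. -/
def Ra (i : ℕ) (w : List (Fin 2)) : Prop := ∃ u, w = 0 :: u ∧ u.count 1 = 1 ∧ u.length = i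

theorem mulA_left {P Q : List (Fin 2) → Prop} (h : ∀ w, P w → Q (0 :: w)) {x : A}
    (hx : x ∈ wordsSpan P) : a * x ∈ wordsSpan Q := by
  rw [a_eq]
  exact wordsSpan_mul (P := fun w => w = [0]) (fun u v hu hv => by rw [hu]; exact h v hv)
    (word_mem_wordsSpan rfl) hx

theorem mulA_right {P Q : List (Fin 2) → Prop} (h : ∀ w, P w → Q (w ++ [0])) {x : A}
    (hx : x ∈ wordsSpan P) : x * a ∈ wordsSpan Q := by
  rw [a_eq]
  exact wordsSpan_mul (Q := fun w => w = [0]) (fun u v hu hv => by rw [hv]; exact h u hu)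
    hx (word_mem_wordsSpan rfl)

theorem word_mul_a (w : List (Fin 2)) : word w * a = word (w ++ [0]) := by
  rw [a_eq, word_append]

theorem a_mul_word (w : List (Fin 2)) : a * word w = word (0 :: w) := by
  rw [a_eq, ← word_append]; rfl

theorem c_expand (i : ℕ) :
    ∃ r ∈ wordsSpan (Ra i), c i = gam i • word (1 :: List.replicate i 0) + r := by
  induction i with
  | zero =>
    refine ⟨0, Submodule.zero_mem _, ?_⟩
    simp [gam, b_eq, show c 0 = b from rfl]
  | succ i ih =>
    obtain ⟨r, hr, hc⟩ := ih
    have haW : a * word (1 :: List.replicate i 0) = word (0 :: 1 :: List.replicate i 0) :=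
      a_mul_word _
    have hWa : word (1 :: List.replicate i 0) * a = word (1 :: List.replicate (i+1) 0) := by
      rw [word_mul_a]
      congr 1
      rw [List.cons_append, List.replicate_succ']
    have haW_mem : word (0 :: 1 :: List.replicate i 0) ∈ wordsSpan (Ra (i+1)) :=
      word_mem_wordsSpan ⟨1 :: List.replicate i 0, rfl, by simp [List.count_replicate], by simp⟩
    have har : a * r ∈ wordsSpan (Ra (i+1)) :=
      mulA_left (fun w hw => by
        obtain ⟨u, rfl, h1, h2⟩ := hw
        exact ⟨0 :: u, rfl, by simpa using h1, by simpa using h2⟩) hr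
    have hra : r * a ∈ wordsSpan (Ra (i+1)) :=
      mulA_right (fun w hw => by
        obtain ⟨u, rfl, h1, h2⟩ := hw
        exact ⟨u ++ [0], by simp, by simpa using h1, by simpa using h2⟩) hr
    by_cases hi : Even i
    · refine ⟨gam i • word (0 :: 1 :: List.replicate i 0) + a * r + r * a, ?_, ?_⟩
      · exact add_mem (add_mem (Submodule.smul_mem _ _ haW_mem) har) hra
      · rw [c_succ_even hi, hc, gam, if_pos hi, one_mul]
        rw [mul_add, add_mul, mul_smul_comm, smul_mul_assoc, haW, hWa]
        module
    · refine ⟨gam i • word (0 :: 1 :: List.replicate i 0) + a * r - r * a, ?_, ?_⟩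
      · exact sub_mem (add_mem (Submodule.smul_mem _ _ haW_mem) har) hra
      · rw [c_succ_odd hi, hc, gam, if_neg hi, neg_one_mul]
        rw [mul_add, add_mul, mul_smul_comm, smul_mul_assoc, haW, hWa]
        module

end Omnibus

namespace Omnibus

def wt (t u : ℕ) : List (Fin 2) := 1 :: (List.replicate t 0 ++ 1 :: List.replicate u 0)

def phi (t u : ℕ) : A →ₗ[ℚ] ℚ := basisWords.coord (FreeMonoid.ofList (wt t u))

theorem phi_word (t u : ℕ) (w : List (Fin 2)) :
    phi t u (word w) = if w = wt t u then 1 else 0 := by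
  classical
  rw [phi, Module.Basis.coord_apply, repr_word, Finsupp.single_apply]
  by_cases h : w = wt t u
  · subst h; simp
  · rw [if_neg (fun hc => h (FreeMonoid.ofList.injective hc)), if_neg h]

theorem phi_kill {P : List (Fin 2) → Prop} {t u : ℕ} (h : ∀ w, P w → w ≠ wt t u) {x : A}
    (hx : x ∈ wordsSpan P) : phi t u x = 0 := by
  induction hx using Submodule.span_induction with
  | mem w hw => obtain ⟨w, hw, rfl⟩ := hw; rw [phi_word, if_neg (h w hw)]
  | zero => exact map_zero _
  | add y z _ _ h1 h2 => rw [map_add, h1, h2, add_zero]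
  | smul r y _ h1 => rw [map_smul, h1, smul_zero]

theorem wt_getElem_self (t u : ℕ) : (wt t u)[t+1]? = some 1 := by
  rw [wt]
  rw [List.getElem?_cons_succ]
  rw [List.getElem?_append_right (by simp)]
  simp

theorem wt_getElem_lt {s t : ℕ} (h : s < t) (u : ℕ) : (wt t u)[s+1]? = some 0 := by
  rw [wt, List.getElem?_cons_succ, List.getElem?_append_left (by simpa using h)]
  simp [h]

theorem ne_wt_head {t u : ℕ} (w : List (Fin 2)) : (0 :: w) ≠ wt t u := by
  rw [wt]
  intro h
  exact absurd (List.head_eq_of_cons_eq h) (by decide)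

theorem prefix_ne {i t u : ℕ} (ht : t ≤ i) (v : List (Fin 2)) :
    (1 :: (List.replicate (i+1) 0 ++ v)) ≠ wt t u := by
  intro h
  have h2 := congrArg (fun l => l[t+1]?) h
  rw [wt_getElem_self, List.getElem?_cons_succ,
    List.getElem?_append_left (by simpa using Nat.lt_succ_of_le ht)] at h2
  simp [Nat.lt_succ_of_le ht] at h2

theorem wt_inj {t u t' u' : ℕ} (h : wt t u = wt t' u') : t = t' := by
  by_contra hne
  rcases Nat.lt_or_ge t t' with hlt | hge
  · have h2 := congrArg (fun l => l[t+1]?) h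
    rw [wt_getElem_self, wt_getElem_lt hlt] at h2
    simp at h2
  · have h2 := congrArg (fun l => l[t'+1]?) h
    rw [wt_getElem_self (t') , wt_getElem_lt (by omega : t' < t)] at h2
    simp at h2

end Omnibus

namespace Omnibus

theorem phi_cc {i j t u : ℕ} (hti : t ≤ i) (htj : t ≤ j) (hu : t + u = i + j) :
    phi t u (c i * c j) = if t = i then gam i * gam j else 0 := by
  obtain ⟨r, hr, hci⟩ := c_expand i
  obtain ⟨s, hs, hcj⟩ := c_expand j
  set Wi := word (1 :: List.replicate i 0) with hWi
  set Wj := word (1 :: List.replicate j 0) with hWj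
  have expand : c i * c j =
      (gam i * gam j) • (Wi * Wj) + gam i • (Wi * s) + (gam j • (r * Wj) + r * s) := by
    rw [hci, hcj]
    simp only [add_mul, mul_add, smul_mul_assoc, mul_smul_comm, smul_smul]
    module
  have hWW : Wi * Wj = word (wt i j) := by
    rw [hWi, hWj, ← word_append]
    rfl
  have h1 : phi t u (Wi * Wj) = if t = i then 1 else 0 := by
    rw [hWW, phi_word]
    by_cases h : t = i
    · have hj' : u = j := by omega
      subst h; subst hj'
      simp
    · rw [if_neg (fun hc => h (wt_inj hc).symm), if_neg h]
  have h2 : phi t u (Wi * s) = 0 := by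
    refine phi_kill (P := fun w => ∃ v, w = 1 :: (List.replicate (i+1) 0 ++ v))
      (fun w hw => ?_) ?_
    · obtain ⟨v, rfl⟩ := hw
      exact prefix_ne hti v
    · refine wordsSpan_mul (P := fun w => w = 1 :: List.replicate i 0) (Q := Ra j)
        (fun w v hw hv => ?_) (word_mem_wordsSpan rfl) hs
      obtain ⟨u', rfl, -, -⟩ := hv
      subst hw
      refine ⟨u', ?_⟩
      rw [List.cons_append]
      congr 1
      rw [List.replicate_succ', List.append_assoc]
      rfl
  have hhead : ∀ z ∈ wordsSpan (Ra i), ∀ y : A, z * y ∈ wordsSpan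
      (fun w => ∃ v, w = 0 :: v) := by
    intro z hz y
    refine wordsSpan_mul (P := Ra i) (Q := fun _ => True) (fun w v hw _ => ?_) hz
      (mem_wordsSpan_top y)
    obtain ⟨u', rfl, -, -⟩ := hw
    exact ⟨u' ++ v, rfl⟩
  have h3 : phi t u (r * Wj) = 0 :=
    phi_kill (fun w hw => by obtain ⟨v, rfl⟩ := hw; exact ne_wt_head v) (hhead r hr Wj)
  have h4 : phi t u (r * s) = 0 :=
    phi_kill (fun w hw => by obtain ⟨v, rfl⟩ := hw; exact ne_wt_head v) (hhead r hr s)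
  rw [expand, map_add, map_add, map_add, map_smul, map_smul, map_smul, h1, h2, h3, h4]
  by_cases h : t = i <;> simp [h]

theorem d_expand_even {i j : ℕ} (hi : Even i) (hj : Even j) :
    d i j = c i * c j + c j * c i := by
  rw [d, br, pr_c_even hi, pr_c_even hj]; noncomm_ring

theorem d_expand_ne {i j : ℕ} (h : ¬ Even i ∨ ¬ Even j) :
    d i j = c i * c j - c j * c i := by
  rcases h with h | h <;> rw [d, br] <;> [rw [pr_c_odd h]; rw [pr_c_odd h]] <;> noncomm_ring

theorem d_symm_even {i j : ℕ} (hi : Even i) (hj : Even j) : d j i = d i j :=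
  br_swap_odd (pr_c_even hi) (pr_c_even hj)

theorem d_symm_ne {i j : ℕ} (h : ¬ Even i ∨ ¬ Even j) : d j i = - d i j := by
  refine br_swap_ne ?_
  rcases h with h | h
  · exact Or.inl (pr_c_odd h)
  · exact Or.inr (pr_c_odd h)

theorem d_diag_odd {i : ℕ} (hi : ¬ Even i) : d i i = 0 := by
  rw [d, br, pr_c_odd hi]; noncomm_ring

/-- `phi t (m-t)` evaluated on `d i j` with `i + j = m`, `t ≤ i`, `t ≤ j`. -/
theorem phi_d {m i j t : ℕ} (hm : i + j = m) (hti : t ≤ i) (htj : t ≤ j) :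
    phi t (m - t) (d i j) =
      (if t = i then gam i * gam j else 0) +
        (if (Even i ∧ Even j) then (if t = j then gam j * gam i else 0)
          else -(if t = j then gam j * gam i else 0)) := by
  have hu1 : t + (m - t) = i + j := by omega
  have hu2 : t + (m - t) = j + i := by omega
  by_cases h : Even i ∧ Even j
  · rw [d_expand_even h.1 h.2, map_add, phi_cc hti htj hu1, phi_cc htj hti hu2, if_pos h]
  · rw [d_expand_ne (by tauto), map_sub, phi_cc hti htj hu1, phi_cc htj hti hu2, if_neg h]
    ring

end Omnibus

namespace Omnibus

def numD (m : ℕ) : ℕ := (m+1)/2 + (if m % 4 = 0 then 1 else 0)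

theorem numD_le (m : ℕ) : numD m ≤ m + 1 := by
  rw [numD]; split <;> omega

theorem lt_numD_prop {m k : ℕ} (h : k < numD m) : 2 * k < m ∨ (2 * k = m ∧ Even k) := by
  rw [numD] at h
  rw [Nat.even_iff]
  revert h
  split <;> intro h <;> omega

theorem half_lt_numD {m j : ℕ} (h : 2 * j < m) : j < numD m := by
  rw [numD]; split <;> omega

theorem En_eq_span_range (m : ℕ) :
    En (m + 2) = Submodule.span ℚ (Set.range (fun k : Fin (numD m) => d k (m - k))) := by
  apply le_antisymm
  · rw [En, Submodule.span_le]
    rintro x ⟨i, j, hn, rfl⟩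
    have hij : i + j = m := by omega
    by_cases hk : i < numD m
    · refine Submodule.subset_span ⟨⟨i, hk⟩, ?_⟩
      simp only
      congr 1
      omega
    · push_neg at hk
      rcases Nat.lt_trichotomy (2 * i) m with h2 | h2 | h2
      · exact absurd (half_lt_numD h2) (by omega)
      · -- i = j, diagonal
        have hij' : i = j := by omega
        subst hij'
        by_cases hev : Even i
        · exfalso
          have h4 : m % 4 = 0 := by
            rw [Nat.even_iff] at hev; omega
          have : i < numD m := by rw [numD, if_pos h4]; omega
          omega
        · rw [d_diag_odd hev]
          exact Submodule.zero_mem _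
      · -- 2 i > m, use symmetry
        have hj : j < numD m := half_lt_numD (by omega)
        have hmem : d j i ∈ Submodule.span ℚ
            (Set.range (fun k : Fin (numD m) => d k (m - k))) := by
          refine Submodule.subset_span ⟨⟨j, hj⟩, ?_⟩
          simp only
          congr 1
          omega
        by_cases hev : Even i ∧ Even j
        · rw [show d i j = d j i from (d_symm_even (i := j) (j := i) hev.2 hev.1).symm ▸ rfl]
          exact hmem
        · have : d i j = - d j i := d_symm_ne (i := j) (j := i) (by tauto)
          rw [this]
          exact neg_mem hmem
  · rw [Submodule.span_le]
    rintro x ⟨k, rfl⟩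
    have hk : (k : ℕ) ≤ m := by have := numD_le m; omega
    exact Submodule.subset_span ⟨k, m - k, by omega, rfl⟩

theorem indep (m : ℕ) :
    LinearIndependent ℚ (fun k : Fin (numD m) => d k (m - k)) := by
  rw [Fintype.linearIndependent_iff]
  intro g hg
  suffices H : ∀ K : ℕ, ∀ k : Fin (numD m), (k : ℕ) = K → g k = 0 from
    fun k => H k k rfl
  intro K
  induction K using Nat.strong_induction_on with
  | _ K ih =>
  rintro k rfl
  have hk2 := lt_numD_prop k.isLt
  have hkm : 2 * (k : ℕ) ≤ m := by omega
  have happ := congrArg (phi k (m - k)) hg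
  rw [map_sum, map_zero] at happ
  have hterm : ∀ k' : Fin (numD m), k' ≠ k →
      phi (k : ℕ) (m - (k : ℕ)) (g k' • d k' (m - k')) = 0 := by
    intro k' hne
    rcases Nat.lt_or_ge (k' : ℕ) (k : ℕ) with hlt | hge
    · rw [ih k' hlt k' rfl, zero_smul, map_zero]
    · have hgt : (k : ℕ) < (k' : ℕ) := lt_of_le_of_ne hge (fun h => hne (Fin.ext h.symm))
      have hk'm : 2 * (k' : ℕ) ≤ m := by have := lt_numD_prop k'.isLt; omega
      have h1 : (k' : ℕ) + (m - (k' : ℕ)) = m := by omega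
      have htle : (k : ℕ) ≤ (k' : ℕ) := hge
      have htj2 : (k : ℕ) ≤ m - (k' : ℕ) := by omega
      rw [map_smul, phi_d h1 htle htj2]
      have hne1 : ¬ ((k : ℕ) = (k' : ℕ)) := by omega
      have hne2 : ¬ ((k : ℕ) = m - (k' : ℕ)) := by omega
      rw [if_neg hne1]
      by_cases hev : Even (k' : ℕ) ∧ Even (m - (k' : ℕ)) <;> simp [hev, hne2]
  have hsum := Finset.sum_eq_single k
    (fun k' _ hne => hterm k' hne) (fun h => absurd (Finset.mem_univ k) h)
  rw [hsum] at happ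
  have h1 : (k : ℕ) + (m - (k : ℕ)) = m := by omega
  have htj2 : (k : ℕ) ≤ m - (k : ℕ) := by omega
  rw [map_smul, phi_d h1 (le_refl _) htj2, if_pos rfl] at happ
  rcases Nat.lt_or_ge (2 * (k : ℕ)) m with hlt | hge
  · -- off-diagonal
    have hne2 : ¬ ((k : ℕ) = m - (k : ℕ)) := by omega
    have hval : gam (k : ℕ) * gam (m - (k : ℕ)) ≠ 0 :=
      mul_ne_zero (gam_ne_zero _) (gam_ne_zero _)
    by_cases hev : Even (k : ℕ) ∧ Even (m - (k : ℕ))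
    · rw [if_pos hev, if_neg hne2, add_zero, smul_eq_mul] at happ
      exact (mul_eq_zero.mp happ).resolve_right hval
    · rw [if_neg hev, if_neg hne2, neg_zero, add_zero, smul_eq_mul] at happ
      exact (mul_eq_zero.mp happ).resolve_right hval
  · -- diagonal: 2k = m, Even k
    have hev : Even (k : ℕ) := by
      rcases hk2 with h | h
      · omega
      · exact h.2
    have hmk : m - (k : ℕ) = (k : ℕ) := by omega
    rw [hmk, if_pos ⟨hev, hev⟩, if_pos rfl, smul_eq_mul] at happ
    have hval : gam (k : ℕ) * gam (k : ℕ) + gam (k : ℕ) * gam (k : ℕ) ≠ 0 := by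
      have h0 := mul_ne_zero (gam_ne_zero (k : ℕ)) (gam_ne_zero (k : ℕ))
      intro hc
      exact h0 (by linarith)
    exact (mul_eq_zero.mp happ).resolve_right hval

end Omnibus

open Omnibus in
/-- For every `n ≥ 1`, the component `L^{(2,n)}` of word length `n` and word length `2` in `b`
of the free graded Lie algebra on two odd generators is finite dimensional, of dimension
`n/2 − 1` if `n ≡ 0 (4)`, `(n−1)/2` if `n` is odd, and `n/2` if `n ≡ 2 (4)`. -/
theorem dim_wordLengthTwoInB (n : ℕ) (hn : 1 ≤ n) :
    FiniteDimensional ℚ (Lkn 2 n) ∧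
    Module.finrank ℚ (Lkn 2 n) =
      (if n % 4 = 0 then n / 2 - 1 else if Odd n then (n - 1) / 2 else n / 2) := by
  by_cases h1 : n = 1
  · subst h1
    have hset : {x : A | ∃ i j, i + j + 2 = 1 ∧ x = d i j} = ∅ :=
      Set.eq_empty_iff_forall_notMem.mpr (by rintro x ⟨i, j, h, -⟩; omega)
    have hE : Lkn 2 1 = ⊥ := by
      rw [Lkn_eq_En, En, hset, Submodule.span_empty]
    constructor
    · rw [hE]; infer_instance
    · rw [hE, finrank_bot]
      norm_num [Nat.odd_iff]
  · obtain ⟨m, rfl⟩ : ∃ m, n = m + 2 := ⟨n - 2, by omega⟩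
    have hEq : Lkn 2 (m + 2) =
        Submodule.span ℚ (Set.range (fun k : Fin (numD m) => d k (m - k))) := by
      rw [Lkn_eq_En, En_eq_span_range]
    constructor
    · rw [hEq]
      exact FiniteDimensional.span_of_finite ℚ (Set.finite_range _)
    · rw [hEq, finrank_span_eq_card (indep m), Fintype.card_fin, numD]
      simp only [Nat.odd_iff]
      split_ifs <;> omega
end
end

section
/- Let L be the model of the free graded Lie algebra on two generators a, b of odd degree described in the context, and let S be any subset of L^{(2)}, the part of L of word length 2 in b. Then the intersection of the Lie ideal I(S) of L generated by S with the span of the words of b-length 2 equals the ℚ-span of the elements ad(a)^l(z) for z ∈ S and l ≥ 0; that is, I(S) ∩ span_ℚ{words w with ℓ_b(w) = 2} = span_ℚ{ad(a)^l(z) : z ∈ S, l ≥ 0}. -/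
/-!
Common setup: the free graded Lie algebra on two odd-degree generators `a`, `b`,
modelled inside its universal enveloping algebra `A := FreeAlgebra ℚ (Fin 2)`.
-/

noncomputable section

namespace Omnibus

/-- A Lie ideal of `L`: a subspace `I ⊆ L` with `⁅z,u⁆ ∈ I` for all `z ∈ L`, `u ∈ I`. -/
def IsLieIdeal (I : Submodule ℚ A) : Prop := I ≤ L ∧ ∀ z ∈ L, ∀ u ∈ I, br z u ∈ I

/-- `I(S)`: the smallest Lie ideal of `L` containing the subset `S`. -/
def lieIdeal (S : Set A) : Submodule ℚ A := sInf {I : Submodule ℚ A | S ⊆ ↑I ∧ IsLieIdeal I}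

end Omnibus

namespace Omnibus
namespace Aux

open Submodule

theorem word_append (w v : List (Fin 2)) : word (w ++ v) = word w * word v := by
  simp [word]

theorem a_eq : a = word [0] := by simp [a, word]
theorem b_eq : b = word [1] := by simp [b, word]
theorem aa_eq : a * a = word [0, 0] := by simp [a, word]

theorem basisWords_apply (m : FreeMonoid (Fin 2)) :
    basisWords m = word (FreeMonoid.toList m) := by
  simp only [basisWords, FreeAlgebra.basisFreeMonoid,
    FreeAlgebra.equivMonoidAlgebraFreeMonoid, word, Module.Basis.map_apply,
    Finsupp.coe_basisSingleOne, AlgEquiv.toLinearEquiv_symm,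
    AlgEquiv.toLinearEquiv_apply, AlgEquiv.ofAlgHom_symm_apply, AlgHom.coe_coe]
  rw [LinearEquiv.trans_symm, LinearEquiv.trans_apply, show (MonoidAlgebra.coeffLinearEquiv ℚ).symm (Finsupp.single m (1:ℚ)) = (MonoidAlgebra.single m 1 : MonoidAlgebra ℚ (FreeMonoid (Fin 2))) from rfl]
  erw [MonoidAlgebra.lift_single]
  rw [FreeMonoid.lift_apply, one_smul]

theorem wordsSpan_eq (P : List (Fin 2) → Prop) :
    wordsSpan P = span ℚ (⇑basisWords '' {m | P (FreeMonoid.toList m)}) := by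
  unfold wordsSpan; congr 1; ext x; constructor
  · rintro ⟨w, hw, rfl⟩
    exact ⟨FreeMonoid.ofList w, by simpa using hw,
      by rw [basisWords_apply, FreeMonoid.toList_ofList]⟩
  · rintro ⟨m, hm, rfl⟩
    exact ⟨FreeMonoid.toList m, hm, (basisWords_apply m).symm⟩

theorem mem_wordsSpan {P : List (Fin 2) → Prop} {x : A} :
    x ∈ wordsSpan P ↔ ∀ m ∈ (basisWords.repr x).support, P (FreeMonoid.toList m) := by
  rw [wordsSpan_eq, Module.Basis.mem_span_image]
  exact ⟨fun h m hm => h hm, fun h m hm => h m hm⟩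

theorem wordsSpan_inf_le (P Q : List (Fin 2) → Prop) :
    wordsSpan P ⊓ wordsSpan Q ≤ wordsSpan fun w => P w ∧ Q w := by
  intro x hx
  rw [Submodule.mem_inf] at hx
  obtain ⟨h1, h2⟩ := hx
  rw [mem_wordsSpan] at h1 h2 ⊢
  exact fun m hm => ⟨h1 m hm, h2 m hm⟩

theorem wordsSpan_mono {P Q : List (Fin 2) → Prop} (h : ∀ w, P w → Q w) :
    wordsSpan P ≤ wordsSpan Q :=
  span_mono (by rintro x ⟨w, hw, rfl⟩; exact ⟨w, h w hw, rfl⟩)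

theorem wordsSpan_false : wordsSpan (fun _ => False) = ⊥ := by
  have : (word '' {w | False}) = (∅ : Set A) := by simp
  rw [wordsSpan, this, span_empty]

theorem wordsSpan_true : wordsSpan (fun _ => True) = ⊤ := by
  rw [wordsSpan_eq]
  have : {m : FreeMonoid (Fin 2) | True} = Set.univ := rfl
  rw [this, Set.image_univ, Module.Basis.span_eq]

theorem mem_wordsSpan_true (x : A) : x ∈ wordsSpan (fun _ => True) := by
  rw [wordsSpan_true]; exact mem_top

theorem word_mem_wordsSpan {P : List (Fin 2) → Prop} {w} (h : P w) : word w ∈ wordsSpan P :=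
  subset_span ⟨w, h, rfl⟩

theorem pr_basis (m : FreeMonoid (Fin 2)) :
    pr (basisWords m) =
      if Odd (FreeMonoid.toList m).length then word (FreeMonoid.toList m) else 0 :=
  Module.Basis.constr_basis _ _ _ _

theorem pr_word (w : List (Fin 2)) :
    pr (word w) = if Odd w.length then word w else 0 := by
  have h := pr_basis (FreeMonoid.ofList w)
  rwa [basisWords_apply, FreeMonoid.toList_ofList] at h

theorem pr_mem_wordsSpan {P : List (Fin 2) → Prop} {x : A} (hx : x ∈ wordsSpan P) :
    pr x ∈ wordsSpan P := by
  unfold wordsSpan at hx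
  induction hx using Submodule.span_induction with
  | mem x hx =>
    obtain ⟨w, hw, rfl⟩ := hx
    rw [pr_word]
    split
    · exact word_mem_wordsSpan hw
    · exact zero_mem _
  | zero => rw [map_zero]; exact zero_mem _
  | add x y _ _ hx hy => rw [map_add]; exact add_mem hx hy
  | smul c x _ hx => rw [map_smul]; exact smul_mem _ _ hx

theorem mul_mem_wordsSpan {P Q R : List (Fin 2) → Prop} {x y : A}
    (hx : x ∈ wordsSpan P) (hy : y ∈ wordsSpan Q)
    (h : ∀ w v, P w → Q v → R (w ++ v)) : x * y ∈ wordsSpan R := by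
  unfold wordsSpan at hx hy
  induction hx using Submodule.span_induction with
  | mem x hx =>
    obtain ⟨w, hw, rfl⟩ := hx
    induction hy using Submodule.span_induction with
    | mem y hy =>
      obtain ⟨v, hv, rfl⟩ := hy
      rw [← word_append]
      exact word_mem_wordsSpan (h w v hw hv)
    | zero => rw [mul_zero]; exact zero_mem _
    | add y z _ _ hy hz => rw [mul_add]; exact add_mem hy hz
    | smul c y _ hy => rw [mul_smul_comm]; exact smul_mem _ _ hy
  | zero => rw [zero_mul]; exact zero_mem _
  | add x z _ _ hx hz => rw [add_mul]; exact add_mem hx hz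
  | smul c x _ hx => rw [smul_mul_assoc]; exact smul_mem _ _ hx

theorem br_mem_wordsSpan {P Q R : List (Fin 2) → Prop} {x y : A}
    (hx : x ∈ wordsSpan P) (hy : y ∈ wordsSpan Q)
    (h1 : ∀ w v, P w → Q v → R (w ++ v)) (h2 : ∀ w v, Q w → P v → R (w ++ v)) :
    br x y ∈ wordsSpan R := by
  have hp : pr y * pr x ∈ wordsSpan R :=
    mul_mem_wordsSpan (pr_mem_wordsSpan hy) (pr_mem_wordsSpan hx) h2
  have : br x y = x * y - y * x + (pr y * pr x + pr y * pr x) := by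
    rw [br, two_mul, add_mul]
  rw [this]
  exact add_mem (sub_mem (mul_mem_wordsSpan hx hy h1) (mul_mem_wordsSpan hy hx h2))
    (add_mem hp hp)

theorem pr_a : pr a = a := by rw [a_eq, pr_word]; simp
theorem pr_b : pr b = b := by rw [b_eq, pr_word]; simp
theorem pr_aa : pr (a * a) = 0 := by
  rw [aa_eq, pr_word]; simp [Nat.odd_iff]

theorem pr_on_basis_mul_a (m : FreeMonoid (Fin 2)) :
    pr (basisWords m * a) = basisWords m * a - pr (basisWords m) * a := by
  rw [basisWords_apply, a_eq, ← word_append, pr_word, pr_word]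
  rcases Nat.even_or_odd (FreeMonoid.toList m).length with h | h
  · have h1 : Odd ((FreeMonoid.toList m ++ [0]).length) := by
      simp [List.length_append, Nat.odd_add_one, Nat.not_odd_iff_even, h]
    have h2 : ¬ Odd (FreeMonoid.toList m).length := by
      simpa [Nat.not_odd_iff_even] using h
    rw [if_pos h1, if_neg h2, word_append, zero_mul, sub_zero]
  · have h1 : ¬ Odd ((FreeMonoid.toList m ++ [0]).length) := by
      simp [List.length_append, Nat.odd_add_one, h]
    rw [if_neg h1, if_pos h, word_append, sub_self]

theorem pr_mul_a (x : A) : pr (x * a) = x * a - pr x * a := by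
  have h : pr ∘ₗ LinearMap.mulRight ℚ a =
      LinearMap.mulRight ℚ a - LinearMap.mulRight ℚ a ∘ₗ pr := by
    apply basisWords.ext
    intro m
    simpa using pr_on_basis_mul_a m
  simpa using LinearMap.congr_fun h x

theorem pr_on_basis_a_mul (m : FreeMonoid (Fin 2)) :
    pr (a * basisWords m) = a * basisWords m - a * pr (basisWords m) := by
  rw [basisWords_apply, a_eq, ← word_append, pr_word, pr_word]
  rcases Nat.even_or_odd (FreeMonoid.toList m).length with h | h
  · have h1 : Odd (([(0 : Fin 2)] ++ FreeMonoid.toList m).length) := by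
      simp [List.length_append, Nat.odd_iff, Nat.even_iff] at h ⊢
      omega
    have h2 : ¬ Odd (FreeMonoid.toList m).length := by
      simpa [Nat.not_odd_iff_even] using h
    rw [if_pos h1, if_neg h2, word_append, mul_zero, sub_zero]
  · have h1 : ¬ Odd (([(0 : Fin 2)] ++ FreeMonoid.toList m).length) := by
      simp [List.length_append, Nat.odd_iff, Nat.even_iff] at h ⊢
      omega
    rw [if_neg h1, if_pos h, word_append, sub_self]

theorem pr_a_mul (x : A) : pr (a * x) = a * x - a * pr x := by
  have h : pr ∘ₗ LinearMap.mulLeft ℚ a =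
      LinearMap.mulLeft ℚ a - LinearMap.mulLeft ℚ a ∘ₗ pr := by
    apply basisWords.ext
    intro m
    simpa using pr_on_basis_a_mul m
  simpa using LinearMap.congr_fun h x

theorem pr_pr (x : A) : pr (pr x) = pr x := by
  have h : pr ∘ₗ pr = pr := by
    apply basisWords.ext
    intro m
    simp only [LinearMap.comp_apply]
    rw [basisWords_apply, pr_word]
    split
    · rw [pr_word]; simp_all
    · rw [map_zero]
  simpa using LinearMap.congr_fun h x

theorem br_aa (u : A) : br (a * a) u = br a (br a u) := by
  have h2 : ∀ x : A, 2 * x * a = x * a + x * a := fun x => by noncomm_ring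
  have hv : pr (a * u - u * a + 2 * pr u * a) = a * u - a * pr u - (u * a - pr u * a) := by
    rw [h2 (pr u)]
    simp only [map_add, map_sub, pr_a_mul, pr_mul_a, pr_pr]
    abel
  simp only [br, pr_a, pr_aa]
  rw [hv]
  noncomm_ring

theorem br_zero_left (y : A) : br 0 y = 0 := by simp [br]
theorem br_zero_right (x : A) : br x 0 = 0 := by simp [br]

theorem br_add_left (x y z : A) : br (x + y) z = br x z + br y z := by
  simp only [br, map_add]
  noncomm_ring

theorem br_add_right (x y z : A) : br x (y + z) = br x y + br x z := by
  simp only [br, map_add]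
  noncomm_ring

theorem br_smul_left (c : ℚ) (x z : A) : br (c • x) z = c • br x z := by
  simp only [br, map_smul, smul_sub, smul_add, mul_smul_comm, smul_mul_assoc]

theorem br_smul_right (c : ℚ) (x z : A) : br x (c • z) = c • br x z := by
  simp only [br, map_smul, smul_sub, smul_add, mul_smul_comm, smul_mul_assoc]

theorem br_mem_of_span_right {I : Submodule ℚ A} {z : A} {s : Set A}
    (h : ∀ u ∈ s, br z u ∈ I) : ∀ u ∈ span ℚ s, br z u ∈ I := by
  intro u hu
  induction hu using Submodule.span_induction with
  | mem u hu => exact h u hu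
  | zero => rw [br_zero_right]; exact zero_mem _
  | add u v _ _ hu hv => rw [br_add_right]; exact add_mem hu hv
  | smul c u _ hu => rw [br_smul_right]; exact smul_mem _ _ hu

theorem br_mem_of_span_left {I : Submodule ℚ A} {u : A} {s : Set A}
    (h : ∀ z ∈ s, br z u ∈ I) : ∀ z ∈ span ℚ s, br z u ∈ I := by
  intro z hz
  induction hz using Submodule.span_induction with
  | mem z hz => exact h z hz
  | zero => rw [br_zero_left]; exact zero_mem _
  | add z w _ _ hz hw => rw [br_add_left]; exact add_mem hz hw
  | smul c z _ hz => rw [br_smul_left]; exact smul_mem _ _ hz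

theorem a_mem_L : a ∈ L := Submodule.mem_sInf.2 fun _ hS => hS.1
theorem b_mem_L : b ∈ L := Submodule.mem_sInf.2 fun _ hS => hS.2.1

theorem L_closed : IsBracketClosed L := fun x hx y hy =>
  Submodule.mem_sInf.2 fun T hT =>
    hT.2.2 x (Submodule.mem_sInf.1 hx T hT) y (Submodule.mem_sInf.1 hy T hT)

theorem a_mem_W0 : a ∈ wordsSpan fun w => w.count 1 = 0 := by
  rw [a_eq]; exact word_mem_wordsSpan (by decide)

theorem aa_mem_W0 : a * a ∈ wordsSpan fun w => w.count 1 = 0 := by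
  rw [aa_eq]; exact word_mem_wordsSpan (by decide)

theorem b_mem_W1 : b ∈ wordsSpan fun w => w.count 1 = 1 := by
  rw [b_eq]; exact word_mem_wordsSpan (by decide)

theorem br_a_a : br a a = a * a + a * a := by
  rw [br, pr_a]; noncomm_ring

theorem aa_mem_L : a * a ∈ L := by
  have h2 := L_closed a a_mem_L a a_mem_L
  rw [br_a_a] at h2
  have h3 := Submodule.smul_mem L ((2 : ℚ)⁻¹) h2
  have h4 : ((2 : ℚ)⁻¹) • (a * a + a * a) = a * a := by
    rw [← two_smul ℚ (a * a), smul_smul]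
    norm_num
  rwa [h4] at h3

/-- The span of `a` and `a²`. -/
def Na : Submodule ℚ A := span ℚ {a, a * a}

theorem Na_le_W0 : Na ≤ wordsSpan fun w => w.count 1 = 0 := by
  rw [Na, span_le]
  rintro x (rfl | rfl)
  · exact a_mem_W0
  · exact aa_mem_W0

theorem br_Na_Na : ∀ x ∈ Na, ∀ y ∈ Na, br x y ∈ Na := by
  intro x hx y hy
  refine br_mem_of_span_left (u := y) ?_ x hx
  intro z hz
  refine br_mem_of_span_right (z := z) ?_ y hy
  intro u hu
  have haa : a * a ∈ Na := subset_span (Or.inr rfl)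
  rcases hz with rfl | rfl <;> rcases hu with rfl | rfl
  · rw [br_a_a]; exact add_mem haa haa
  · have h : br a (a * a) = 0 := by rw [br, pr_a, pr_aa]; noncomm_ring
    rw [h]; exact zero_mem _
  · have h : br (a * a) a = 0 := by rw [br, pr_a, pr_aa]; noncomm_ring
    rw [h]; exact zero_mem _
  · have h : br (a * a) (a * a) = 0 := by rw [br, pr_aa]; noncomm_ring
    rw [h]; exact zero_mem _

theorem adIter_zero (x y : A) : adIter x 0 y = y := rfl

theorem adIter_succ (x : A) (l : ℕ) (y : A) :
    adIter x (l + 1) y = br x (adIter x l y) :=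
  Function.iterate_succ_apply' _ _ _

theorem br_mem_ge_right (n : ℕ) {z u : A} (hu : u ∈ wordsSpan fun w => n ≤ w.count 1) :
    br z u ∈ wordsSpan fun w => n ≤ w.count 1 :=
  br_mem_wordsSpan (mem_wordsSpan_true z) hu
    (fun w v _ h => by simp only [List.count_append]; omega)
    (fun w v h _ => by simp only [List.count_append]; omega)

theorem br_mem_ge_left (n : ℕ) {z u : A} (hz : z ∈ wordsSpan fun w => n ≤ w.count 1) :
    br z u ∈ wordsSpan fun w => n ≤ w.count 1 :=
  br_mem_wordsSpan hz (mem_wordsSpan_true u)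
    (fun w v h _ => by simp only [List.count_append]; omega)
    (fun w v _ h => by simp only [List.count_append]; omega)

theorem L_le_N : L ≤ Na ⊔ wordsSpan fun w => 1 ≤ w.count 1 := by
  apply sInf_le
  refine ⟨Submodule.mem_sup_left (subset_span (Or.inl rfl)),
    Submodule.mem_sup_right (wordsSpan_mono (fun w h => h.ge) b_mem_W1), ?_⟩
  intro x hx y hy
  obtain ⟨x0, hx0, x1, hx1, rfl⟩ := Submodule.mem_sup.1 hx
  obtain ⟨y0, hy0, y1, hy1, rfl⟩ := Submodule.mem_sup.1 hy
  rw [br_add_left, br_add_right, br_add_right]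
  refine add_mem (add_mem ?_ ?_) (add_mem ?_ ?_)
  · exact Submodule.mem_sup_left (br_Na_Na x0 hx0 y0 hy0)
  · exact Submodule.mem_sup_right (br_mem_ge_right 1 hy1)
  · exact Submodule.mem_sup_right (br_mem_ge_left 1 hx1)
  · exact Submodule.mem_sup_right (br_mem_ge_left 1 hx1)

theorem Lk0_le_Na : Lk 0 ≤ Na := by
  intro x hx
  rw [Lk, Submodule.mem_inf] at hx
  obtain ⟨u, hu, v, hv, huv⟩ := Submodule.mem_sup.1 (L_le_N hx.1)
  have hvx : v = x - u := by rw [← huv]; abel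
  have hW : v ∈ wordsSpan fun w => w.count 1 = 0 := by
    rw [hvx]; exact sub_mem hx.2 (Na_le_W0 hu)
  have hbot : v ∈ wordsSpan fun _ => False := by
    have hmem := wordsSpan_inf_le _ _ (Submodule.mem_inf.2 ⟨hW, hv⟩)
    exact wordsSpan_mono (fun w hw => by obtain ⟨h1, h2⟩ := hw; omega) hmem
  rw [wordsSpan_false, Submodule.mem_bot] at hbot
  rw [← huv, hbot, add_zero]
  exact hu

theorem L_le_iSup : L ≤ ⨆ k, Lk k := by
  apply sInf_le
  refine ⟨Submodule.mem_iSup_of_mem 0 (Submodule.mem_inf.2 ⟨a_mem_L, a_mem_W0⟩),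
    Submodule.mem_iSup_of_mem 1 (Submodule.mem_inf.2 ⟨b_mem_L, b_mem_W1⟩), ?_⟩
  intro x hx y hy
  induction hx using Submodule.iSup_induction' with
  | mem i x hxi =>
    induction hy using Submodule.iSup_induction' with
    | mem j y hyj =>
      refine Submodule.mem_iSup_of_mem (i + j) (Submodule.mem_inf.2
        ⟨L_closed x (Submodule.mem_inf.1 hxi).1 y (Submodule.mem_inf.1 hyj).1, ?_⟩)
      exact br_mem_wordsSpan (Submodule.mem_inf.1 hxi).2 (Submodule.mem_inf.1 hyj).2
        (fun w v h1 h2 => by simp only [List.count_append]; omega)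
        (fun w v h1 h2 => by simp only [List.count_append]; omega)
    | zero => rw [br_zero_right]; exact zero_mem _
    | add y' z' _ _ ihy ihz => rw [br_add_right]; exact add_mem ihy ihz
  | zero => rw [br_zero_left]; exact zero_mem _
  | add x' z' _ _ ihx ihz => rw [br_add_left]; exact add_mem ihx ihz

end Aux
end Omnibus

open Omnibus in
/-- For any subset `S ⊆ L^{(2)}`, the intersection of the Lie ideal `I(S)` of `L` with the span
of the words of `b`-length `2` is the span of the elements `ad(a)^l(z)`, `z ∈ S`, `l ≥ 0`. -/
theorem lieIdeal_inter_wordLengthTwoInB (S : Set A) (hS : S ⊆ ↑(Lk 2)) :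
    lieIdeal S ⊓ wordsSpan (fun w => w.count 1 = 2) =
      Submodule.span ℚ {x : A | ∃ z ∈ S, ∃ l : ℕ, x = adIter a l z} := by
  classical
  set J := Submodule.span ℚ {x : A | ∃ z ∈ S, ∃ l : ℕ, x = adIter a l z} with hJdef
  have hgen : ∀ z ∈ S, ∀ l : ℕ,
      adIter a l z ∈ L ∧ adIter a l z ∈ wordsSpan fun w => w.count 1 = 2 := by
    intro z hz l
    induction l with
    | zero =>
      rw [Aux.adIter_zero]
      have h := hS hz
      rw [show ((Lk 2 : Submodule ℚ A) : Set A) =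
        ↑(L ⊓ wordsSpan fun w => w.count 1 = 2) from rfl] at h
      exact Submodule.mem_inf.1 h
    | succ l ih =>
      rw [Aux.adIter_succ]
      refine ⟨Aux.L_closed a Aux.a_mem_L _ ih.1, ?_⟩
      exact Aux.br_mem_wordsSpan Aux.a_mem_W0 ih.2
        (fun w v h1 h2 => by simp only [List.count_append]; omega)
        (fun w v h1 h2 => by simp only [List.count_append]; omega)
  have hJ_L : J ≤ L := by
    rw [hJdef, Submodule.span_le]
    rintro x ⟨z, hz, l, rfl⟩
    exact (hgen z hz l).1
  have hJ_W2 : J ≤ wordsSpan fun w => w.count 1 = 2 := by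
    rw [hJdef, Submodule.span_le]
    rintro x ⟨z, hz, l, rfl⟩
    exact (hgen z hz l).2
  set I' := J ⊔ (L ⊓ wordsSpan fun w => 3 ≤ w.count 1) with hI'def
  have hI'_le_L : I' ≤ L := sup_le hJ_L inf_le_left
  have key1 : ∀ z, z ∈ (⨆ k, Lk k) → ∀ u ∈ J, br z u ∈ I' := by
    intro z hz
    induction hz using Submodule.iSup_induction' with
    | mem k z hzk =>
      intro u hu
      match k with
      | 0 =>
        have hzNa : z ∈ Aux.Na := Aux.Lk0_le_Na hzk
        refine Aux.br_mem_of_span_right ?_ u hu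
        rintro u' ⟨s, hs, l, rfl⟩
        refine Aux.br_mem_of_span_left ?_ z hzNa
        rintro w (rfl | rfl)
        · rw [← Aux.adIter_succ]
          exact Submodule.mem_sup_left (Submodule.subset_span ⟨s, hs, l + 1, rfl⟩)
        · rw [Aux.br_aa, ← Aux.adIter_succ, ← Aux.adIter_succ]
          exact Submodule.mem_sup_left (Submodule.subset_span ⟨s, hs, l + 2, rfl⟩)
      | (k + 1) =>
        refine Submodule.mem_sup_right (Submodule.mem_inf.2
          ⟨Aux.L_closed z (Submodule.mem_inf.1 hzk).1 u (hJ_L hu), ?_⟩)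
        exact Aux.br_mem_wordsSpan (Submodule.mem_inf.1 hzk).2 (hJ_W2 hu)
          (fun w v h1 h2 => by simp only [List.count_append]; omega)
          (fun w v h1 h2 => by simp only [List.count_append]; omega)
    | zero => intro u hu; rw [Aux.br_zero_left]; exact zero_mem _
    | add z' w' _ _ ihz ihw =>
      intro u hu
      rw [Aux.br_add_left]
      exact add_mem (ihz u hu) (ihw u hu)
  have hI'_ideal : IsLieIdeal I' := by
    refine ⟨hI'_le_L, ?_⟩
    intro z hzL u hu
    rw [hI'def] at hu
    obtain ⟨u₁, hu₁, u₂, hu₂, rfl⟩ := Submodule.mem_sup.1 hu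
    rw [Aux.br_add_right]
    refine add_mem (key1 z (Aux.L_le_iSup hzL) u₁ hu₁) ?_
    refine Submodule.mem_sup_right (Submodule.mem_inf.2
      ⟨Aux.L_closed z hzL u₂ (Submodule.mem_inf.1 hu₂).1, ?_⟩)
    exact Aux.br_mem_ge_right 3 (Submodule.mem_inf.1 hu₂).2
  have hI'mem : I' ∈ {I : Submodule ℚ A | S ⊆ ↑I ∧ IsLieIdeal I} := by
    refine ⟨fun z hz => Submodule.mem_sup_left (Submodule.subset_span ⟨z, hz, 0, rfl⟩), hI'_ideal⟩
  apply le_antisymm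
  · intro x hx
    rw [Submodule.mem_inf] at hx
    have hle : lieIdeal S ≤ I' := sInf_le hI'mem
    obtain ⟨u₁, hu₁, u₂, hu₂, huv⟩ := Submodule.mem_sup.1 (hle hx.1)
    have hu₂W2 : u₂ ∈ wordsSpan fun w => w.count 1 = 2 := by
      have h : u₂ = x - u₁ := by rw [← huv]; abel
      rw [h]; exact sub_mem hx.2 (hJ_W2 hu₁)
    have hbot : u₂ ∈ wordsSpan fun _ => False := by
      have hmem := Aux.wordsSpan_inf_le _ _
        (Submodule.mem_inf.2 ⟨hu₂W2, (Submodule.mem_inf.1 hu₂).2⟩)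
      exact Aux.wordsSpan_mono (fun w hw => by obtain ⟨h1, h2⟩ := hw; omega) hmem
    rw [Aux.wordsSpan_false, Submodule.mem_bot] at hbot
    rw [← huv, hbot, add_zero]
    exact hu₁
  · rw [Submodule.span_le]
    rintro x ⟨z, hz, l, rfl⟩
    refine Submodule.mem_inf.2 ⟨?_, (hgen z hz l).2⟩
    refine Submodule.mem_sInf.2 fun I hI => ?_
    induction l with
    | zero => exact hI.1 hz
    | succ l ih => rw [Aux.adIter_succ]; exact hI.2.2 a Aux.a_mem_L _ ih
end
end
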